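/- Let n ≥ 2 and 1 ≤ p ≤ n. For every integer m with 0 ≤ m ≤ 2p−2 there exists a polynomial P ∈ ℚ[x] of degree at most p such that for every integer ℓ with 0 ≤ ℓ ≤ n, the coefficient of zᵐ in Ã_p^{(ℓ)}(z) equals P(ℓ). Moreover, the coefficient of zᵐ in Ã_p^{(ℓ)}(z) is 0 for every m > 2p−2, i.e. Ã_p^{(ℓ)}(z) has degree at most 2p−2 (so that A_p^{(ℓ)}(z) = z^{−p} Ã_p^{(ℓ)}(z) is a Laurent polynomial with exponents between −p and p−2). (This is Remark 3.3 of the paper.) -/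

import Mathlib

noncomputable section

open Finset PowerSeries

/-- Binomial coefficient `binom b a` with integer arguments,
zero when `a < 0` or `b < a`. -/
def ibinom (b a : ℤ) : ℤ := if a < 0 ∨ b < a then 0 else (b.toNat.choose a.toNat : ℤ)

/-- One-norm `‖μ‖` of an integer vector. -/
def onenorm {n : ℕ} (μ : Fin n → ℤ) : ℕ := ∑ i, (μ i).natAbs

/-- `Z(μ)`: number of zero coordinates. -/
def zcount {n : ℕ} (μ : Fin n → ℤ) : ℕ := (univ.filter fun i => μ i = 0).card

/-- `N_𝓛(k, ℓ)`. -/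
def Ncard {n : ℕ} (L : Set (Fin n → ℤ)) (k ℓ : ℕ) : ℕ :=
  {μ : Fin n → ℤ | μ ∈ L ∧ onenorm μ = k ∧ zcount μ = ℓ}.ncard

/-- `N_𝓛(k)`. -/
def NcardTot {n : ℕ} (L : Set (Fin n → ℤ)) (k : ℕ) : ℕ :=
  {μ : Fin n → ℤ | μ ∈ L ∧ onenorm μ = k}.ncard

/-- `ϑ_𝓛^{(ℓ)}(z) = Σ_{k≥0} N_𝓛(k,ℓ) z^k`. -/
def thetaL {n : ℕ} (L : Set (Fin n → ℤ)) (ℓ : ℕ) : PowerSeries ℤ :=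
  PowerSeries.mk fun k => (Ncard L k ℓ : ℤ)

/-- `ϑ_𝓛(z) = Σ_{k≥0} N_𝓛(k) z^k`. -/
def thetaTot {n : ℕ} (L : Set (Fin n → ℤ)) : PowerSeries ℤ :=
  PowerSeries.mk fun k => (NcardTot L k : ℤ)

/-- `N_𝓛^red(k,ℓ)`, counting elements of `C(q) ∩ 𝓛`. -/
def NcardRed {n : ℕ} (L : Set (Fin n → ℤ)) (q k ℓ : ℕ) : ℕ :=
  {μ : Fin n → ℤ | (∀ i, |μ i| < (q : ℤ)) ∧ μ ∈ L ∧ onenorm μ = k ∧ zcount μ = ℓ}.ncard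

/-- `Φ_𝓛^{(ℓ)}(z) = Σ_{k≥0} N_𝓛^red(k,ℓ) z^k`. -/
def PhiL {n : ℕ} (L : Set (Fin n → ℤ)) (q ℓ : ℕ) : PowerSeries ℤ :=
  PowerSeries.mk fun k => (NcardRed L q k ℓ : ℤ)

/-- `𝓛` is `q`-periodic: `μ ∈ 𝓛 ↔ μ + qν ∈ 𝓛`. -/
def qPeriodic {n : ℕ} (q : ℕ) (L : Set (Fin n → ℤ)) : Prop :=
  ∀ μ ν : Fin n → ℤ, μ ∈ L ↔ (μ + (q : ℤ) • ν) ∈ L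

/-- `M_𝓛(k,p)`. -/
def Mcoef {n : ℕ} (L : Set (Fin n → ℤ)) (k p : ℕ) : ℤ :=
  ∑ ℓ ∈ range (n+1), ∑ r ∈ range ((k-1+p)/2 + 1),
    (Ncard L (k-1+p-2*r) ℓ : ℤ) *
    ∑ j ∈ Icc 1 p, (-1 : ℤ)^(j-1) *
      ∑ t ∈ range ((p-j)/2 + 1), ibinom ((n : ℤ) - p + j + 2*t) t *
        ∑ β ∈ range (p-j-2*t+1),
          2^(p-j-2*t-β) * ibinom ((n : ℤ) - ℓ) β * ibinom (ℓ : ℤ) ((p-j-2*t-β : ℕ)) *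
          ∑ α ∈ range (β+1), ibinom (β : ℤ) α *
            ∑ i ∈ range j, ibinom ((r : ℤ) - i - p + j + α + t + n - 2) ((n : ℤ) - 2)

/-- `Ã_p^{(ℓ)}(z) = z^p A_p^{(ℓ)}(z)`. -/
def Atilde (n p ℓ : ℕ) : PowerSeries ℤ :=
  ∑ j ∈ Icc 1 p, C ((-1 : ℤ)^(j-1)) *
    ∑ t ∈ range ((p-j)/2 + 1), C (ibinom ((n : ℤ) - p + j + 2*t) t) *
      ∑ β ∈ range (p-j-2*t+1),
        C (2^(p-j-2*t-β) * ibinom ((n : ℤ) - ℓ) β * ibinom (ℓ : ℤ) ((p-j-2*t-β : ℕ))) *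
        ∑ α ∈ range (β+1), C (ibinom (β : ℤ) α) *
          ∑ i ∈ range j, (X : PowerSeries ℤ)^(2*p - 2*(j+t+α-i))

/-- `Υ_m^{(ℓ)}(z)`; zero when `m < 0`. -/
def Upsilon {n : ℕ} (L : Set (Fin n → ℤ)) (m : ℤ) (ℓ : ℕ) : PowerSeries ℤ :=
  if m < 0 then 0 else
    ∑ h ∈ range (m.toNat + 1),
      C (∑ s ∈ range (h/2 + 1), (Ncard L (h - 2*s) ℓ : ℤ) * ((s + n - 2).choose (n-2) : ℤ)) *
        (X : PowerSeries ℤ)^h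

/-- `B̃_{𝓛,p}^{(ℓ)}(z) = z^p B_{𝓛,p}^{(ℓ)}(z)`. -/
def Btilde {n : ℕ} (L : Set (Fin n → ℤ)) (p ℓ : ℕ) : PowerSeries ℤ :=
  ∑ j ∈ Icc 1 p, C ((-1 : ℤ)^(j-1)) *
    ∑ t ∈ range ((p-j)/2 + 1), C (ibinom ((n : ℤ) - p + j + 2*t) t) *
      ∑ β ∈ range (p-j-2*t+1),
        C (2^(p-j-2*t-β) * ibinom ((n : ℤ) - ℓ) β * ibinom (ℓ : ℤ) ((p-j-2*t-β : ℕ))) *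
        ∑ α ∈ range (β+1), C (ibinom (β : ℤ) α) *
          ∑ i ∈ range j,
            (X : PowerSeries ℤ)^(2*p - 2*(j+t+α-i)) *
              Upsilon L (2*((j : ℤ) + t + α - i) - p - 1) ℓ

/-- `C_{p,g}^{(ℓ)}`. -/
def Cpg (n p g ℓ : ℕ) : ℤ :=
  ∑ j ∈ Icc 1 p, (-1 : ℤ)^(j-1) *
    ∑ t ∈ range ((p-j)/2 + 1), ibinom ((n : ℤ) - p + j + 2*t) t *
      ∑ β ∈ range (p-j-2*t+1),
        2^(p-j-2*t-β) * ibinom ((n : ℤ) - ℓ) β * ibinom (ℓ : ℤ) ((p-j-2*t-β : ℕ)) *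
        ∑ i ∈ range j, ibinom (β : ℤ) ((p : ℤ) + i - j - t - g)

lemma ibinom_natCast (b a : ℕ) : ibinom b a = (b.choose a : ℤ) := by
  unfold ibinom
  split
  · rcases ‹_› with h | h
    · omega
    · rw [Nat.choose_eq_zero_of_lt (by exact_mod_cast h)]; simp
  · simp

def Pchoose (b : ℕ) : Polynomial ℚ := Polynomial.C (1 / (b.factorial : ℚ)) * descPochhammer ℚ b

lemma Pchoose_natDegree (b : ℕ) : (Pchoose b).natDegree ≤ b := by
  refine (Polynomial.natDegree_C_mul_le _ _).trans ?_
  rw [descPochhammer_natDegree]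

lemma Pchoose_eval (b x : ℕ) : (Pchoose b).eval (x : ℚ) = (x.choose b : ℚ) := by
  simp only [Pchoose, Polynomial.eval_mul, Polynomial.eval_C,
    descPochhammer_eval_eq_descFactorial]
  rw [Nat.descFactorial_eq_factorial_mul_choose]
  push_cast
  field_simp

lemma coeff_Atilde (n p ℓ m : ℕ) :
    PowerSeries.coeff m (Atilde n p ℓ) =
    ∑ j ∈ Icc 1 p, (-1 : ℤ)^(j-1) *
      ∑ t ∈ range ((p-j)/2 + 1), ibinom ((n : ℤ) - p + j + 2*t) t *
        ∑ β ∈ range (p-j-2*t+1),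
          (2^(p-j-2*t-β) * ibinom ((n : ℤ) - ℓ) β * ibinom (ℓ : ℤ) ((p-j-2*t-β : ℕ))) *
          ∑ α ∈ range (β+1), ibinom (β : ℤ) α *
            ∑ i ∈ range j, (if m = 2*p - 2*(j+t+α-i) then (1:ℤ) else 0) := by
  simp only [Atilde, map_sum, PowerSeries.coeff_C_mul, PowerSeries.coeff_X_pow]


/-- Remark 3.3: each coefficient of `Ã_p^{(ℓ)}(z)` is a polynomial
in `ℓ` of degree at most `p`, and `Ã_p^{(ℓ)}(z)` has degree at most `2p-2`. -/
theorem stmt18 {n p : ℕ} (hn : 2 ≤ n) (hp1 : 1 ≤ p) (hpn : p ≤ n) :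
    (∀ m : ℕ, m ≤ 2*p - 2 → ∃ P : Polynomial ℚ, P.natDegree ≤ p ∧
        ∀ ℓ : ℕ, ℓ ≤ n →
          ((PowerSeries.coeff m (Atilde n p ℓ) : ℤ) : ℚ) = Polynomial.eval (ℓ : ℚ) P) ∧
      (∀ m : ℕ, 2*p - 2 < m → ∀ ℓ : ℕ, ℓ ≤ n →
        PowerSeries.coeff m (Atilde n p ℓ) = 0) := by
  constructor
  · intro m hm
    refine ⟨∑ j ∈ Icc 1 p, Polynomial.C ((-1:ℚ)^(j-1)) *
      ∑ t ∈ range ((p-j)/2 + 1), Polynomial.C ((ibinom ((n : ℤ) - p + j + 2*t) t : ℤ) : ℚ) *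
        ∑ β ∈ range (p-j-2*t+1),
          (Polynomial.C ((2:ℚ)^(p-j-2*t-β)) *
            (Pchoose β).comp (Polynomial.C (n:ℚ) - Polynomial.X) * Pchoose (p-j-2*t-β)) *
          ∑ α ∈ range (β+1), Polynomial.C ((ibinom (β : ℤ) α : ℤ) : ℚ) *
            ∑ i ∈ range j, (if m = 2*p - 2*(j+t+α-i) then (1:Polynomial ℚ) else 0), ?_, ?_⟩
    · refine Polynomial.natDegree_sum_le_of_forall_le _ _ fun j hj => ?_
      refine (Polynomial.natDegree_C_mul_le _ _).trans ?_
      refine Polynomial.natDegree_sum_le_of_forall_le _ _ fun t ht => ?_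
      refine (Polynomial.natDegree_C_mul_le _ _).trans ?_
      refine Polynomial.natDegree_sum_le_of_forall_le _ _ fun β hβ => ?_
      simp only [Finset.mem_range] at hβ
      have h1 : ((Pchoose β).comp (Polynomial.C (n:ℚ) - Polynomial.X)).natDegree ≤ β := by
        refine Polynomial.natDegree_comp_le.trans ?_
        calc (Pchoose β).natDegree * (Polynomial.C (n:ℚ) - Polynomial.X).natDegree
            ≤ β * 1 := by
              refine Nat.mul_le_mul (Pchoose_natDegree β) ?_
              refine (Polynomial.natDegree_sub_le _ _).trans ?_
              simp
          _ = β := by ring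
      have h2 : (∑ α ∈ range (β+1), Polynomial.C ((ibinom (β : ℤ) α : ℤ) : ℚ) *
            ∑ i ∈ range j, (if m = 2*p - 2*(j+t+α-i)
              then (1:Polynomial ℚ) else 0)).natDegree ≤ 0 := by
        refine Polynomial.natDegree_sum_le_of_forall_le _ _ fun α hα => ?_
        refine (Polynomial.natDegree_C_mul_le _ _).trans ?_
        refine Polynomial.natDegree_sum_le_of_forall_le _ _ fun i hi => ?_
        split <;> simp
      refine (Polynomial.natDegree_mul_le).trans ?_
      have h3 := (Polynomial.natDegree_mul_le
        (p := Polynomial.C ((2:ℚ)^(p-j-2*t-β)) *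
          (Pchoose β).comp (Polynomial.C (n:ℚ) - Polynomial.X))
        (q := Pchoose (p-j-2*t-β)))
      have h4 := Polynomial.natDegree_mul_le (p := Polynomial.C ((2:ℚ)^(p-j-2*t-β)))
        (q := (Pchoose β).comp (Polynomial.C (n:ℚ) - Polynomial.X))
      have h5 := Pchoose_natDegree (p-j-2*t-β)
      simp only [Polynomial.natDegree_C] at h4
      omega
    · intro ℓ hℓ
      rw [coeff_Atilde]
      rw [show ((n:ℤ) - ℓ) = (((n - ℓ : ℕ) : ℤ)) by push_cast; omega]
      push_cast [ibinom_natCast]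
      rw [Polynomial.eval_finset_sum]
      refine Finset.sum_congr rfl fun j hj => ?_
      rw [Polynomial.eval_mul, Polynomial.eval_C, Polynomial.eval_finset_sum]
      congr 1
      refine Finset.sum_congr rfl fun t ht => ?_
      rw [Polynomial.eval_mul, Polynomial.eval_C, Polynomial.eval_finset_sum]
      congr 1
      refine Finset.sum_congr rfl fun β hβ => ?_
      simp only [Polynomial.eval_mul, Polynomial.eval_C, Polynomial.eval_comp,
        Polynomial.eval_sub, Polynomial.eval_X, Polynomial.eval_finset_sum]
      rw [show (n:ℚ) - ℓ = (((n-ℓ:ℕ):ℚ)) by rw [Nat.cast_sub hℓ]]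
      rw [Pchoose_eval, Pchoose_eval]
      congr 1
      refine Finset.sum_congr rfl fun α hα => ?_
      congr 1
      refine Finset.sum_congr rfl fun i hi => ?_
      split <;> simp
  · intro m hm ℓ hℓ
    rw [coeff_Atilde]
    refine Finset.sum_eq_zero fun j hj => mul_eq_zero_of_right _
      (Finset.sum_eq_zero fun t ht => mul_eq_zero_of_right _
      (Finset.sum_eq_zero fun β hβ => mul_eq_zero_of_right _
      (Finset.sum_eq_zero fun α hα => mul_eq_zero_of_right _
      (Finset.sum_eq_zero fun i hi => ?_))))
    simp only [Finset.mem_Icc] at hj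
    simp only [Finset.mem_range] at hi
    rw [if_neg]
    omega
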